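/- Let g be a short sl₂-Lie superalgebra with M = {α ∈ g : hα = α} and triple product (m,n,r) := −[[m, f n], r]. Then for all homogeneous m, n, r, s ∈ M: (m,n,r)⋆s + (−1)^{|r|(|m|+|n|)} r⋆(m,n,s) = (−1)^{|n|(|r|+|s|)} m⋆((r⋆s)•n), where x⋆y = [x,y] and a•n = [a, f n]. -/
import Mathlib


/-- The Koszul sign `(-1)^{ij}` for parities `i j : ZMod 2`. -/
noncomputable def sg (i j : ZMod 2) : ℂ := (-1 : ℂ) ^ (i.val * j.val)

/-- A short `sl₂`-Lie superalgebra: a Z/2-graded complex Lie superalgebra `(G, B)`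
together with operators `E F H` satisfying the `sl₂` relations, acting by even
derivations, such that `G` is spanned by `H`-eigenvectors with eigenvalues in
`{-2,-1,0,1,2}` (which, over `ℂ`, is exactly the condition that `G` decomposes as an
`sl₂`-module into copies of the adjoint, the natural and the trivial representations,
i.e. `G ≅ sl₂⊗J ⊕ V⊗M ⊕ D`). -/
structure ShortSL2 {G : Type} [AddCommGroup G] [Module ℂ G]
    (gr : ZMod 2 → Submodule ℂ G)
    (B : G →ₗ[ℂ] G →ₗ[ℂ] G)
    (E F H : G →ₗ[ℂ] G) : Prop where
  bracket_grade : ∀ i j : ZMod 2, ∀ a ∈ gr i, ∀ b ∈ gr j, B a b ∈ gr (i + j)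
  antisymm : ∀ i j : ZMod 2, ∀ a ∈ gr i, ∀ b ∈ gr j, B a b = -(sg i j • B b a)
  jacobi : ∀ i j : ZMod 2, ∀ a ∈ gr i, ∀ b ∈ gr j, ∀ c : G,
      B a (B b c) = B (B a b) c + sg i j • B b (B a c)
  grade_spans : ∀ x : G, ∃ x0 x1 : G, x0 ∈ gr 0 ∧ x1 ∈ gr 1 ∧ x = x0 + x1
  rel_HE : H ∘ₗ E - E ∘ₗ H = 2 • E
  rel_HF : H ∘ₗ F - F ∘ₗ H = -(2 • F)
  rel_EF : E ∘ₗ F - F ∘ₗ E = H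
  derE : ∀ x y : G, E (B x y) = B (E x) y + B x (E y)
  derF : ∀ x y : G, F (B x y) = B (F x) y + B x (F y)
  derH : ∀ x y : G, H (B x y) = B (H x) y + B x (H y)
  evenE : ∀ i : ZMod 2, ∀ x ∈ gr i, E x ∈ gr i
  evenF : ∀ i : ZMod 2, ∀ x ∈ gr i, F x ∈ gr i
  evenH : ∀ i : ZMod 2, ∀ x ∈ gr i, H x ∈ gr i
  short : ∀ x : G, ∃ x2 x1 x0 y1 y2 : G,
      H x2 = (2 : ℂ) • x2 ∧ H x1 = x1 ∧ H x0 = 0 ∧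
      H y1 = (-1 : ℂ) • y1 ∧ H y2 = (-2 : ℂ) • y2 ∧ x = x2 + x1 + x0 + y1 + y2

/-- The triple product `(m,n,r) := −[[m, f n], r]` on `M = {m : H m = m}`. -/
noncomputable def trip {G : Type} [AddCommGroup G] [Module ℂ G]
    (B : G →ₗ[ℂ] G →ₗ[ℂ] G) (F : G →ₗ[ℂ] G) (m n r : G) : G :=
  -(B (B m (F n)) r)

/-- In a short `sl₂`-Lie superalgebra, an eigenvector of `H` with eigenvalue `3` is zero. -/
theorem shortSL2_eig3_zero {G : Type} [AddCommGroup G] [Module ℂ G]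
    {gr : ZMod 2 → Submodule ℂ G} {B : G →ₗ[ℂ] G →ₗ[ℂ] G} {E F H : G →ₗ[ℂ] G}
    (h : ShortSL2 gr B E F H) (x : G) (hx : H x = (3:ℂ) • x) : x = 0 := by
  obtain ⟨x2, x1, x0, y1, y2, h2, h1, h0, hm1, hm2, hsum⟩ := h.short x
  have e1 : (3:ℂ) • x = (2:ℂ) • x2 + x1 + (-1:ℂ) • y1 + (-2:ℂ) • y2 := by
    rw [← hx, hsum]
    simp only [map_add, h2, h1, h0, hm1, hm2]
    abel
  have e2 : (9:ℂ) • x = (4:ℂ) • x2 + x1 + y1 + (4:ℂ) • y2 := by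
    have t := congrArg H e1
    simp only [map_add, map_smul, hx, h2, h1, hm1, hm2, smul_smul] at t
    norm_num at t
    linear_combination (norm := module) t
  have e3 : (27:ℂ) • x = (8:ℂ) • x2 + x1 + (-1:ℂ) • y1 + (-8:ℂ) • y2 := by
    have t := congrArg H e2
    simp only [map_add, map_smul, hx, h2, h1, hm1, hm2, smul_smul] at t
    norm_num at t
    linear_combination (norm := module) t
  have e5 : (243:ℂ) • x = (32:ℂ) • x2 + x1 + (-1:ℂ) • y1 + (-32:ℂ) • y2 := by
    have e4 : (81:ℂ) • x = (16:ℂ) • x2 + x1 + y1 + (16:ℂ) • y2 := by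
      have t := congrArg H e3
      simp only [map_add, map_smul, hx, h2, h1, hm1, hm2, smul_smul] at t
      norm_num at t
      linear_combination (norm := module) t
    have t := congrArg H e4
    simp only [map_add, map_smul, hx, h2, h1, hm1, hm2, smul_smul] at t
    norm_num at t
    linear_combination (norm := module) t
  have key : (120:ℂ) • x = 0 := by
    linear_combination (norm := module) e5 - (5:ℂ) • e3 + (4:ℂ) • e1
  simpa using smul_eq_zero.mp key

/-- In a short `sl₂`-Lie superalgebra,
`(m,n,r)⋆s + (−1)^{|r|(|m|+|n|)} r⋆(m,n,s) = (−1)^{|n|(|r|+|s|)} m⋆((r⋆s)•n)`,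
with `x⋆y = [x,y]` and `a•n = [a, f n]`. -/
theorem shortSL2_trip_SJT5
    {G : Type} [AddCommGroup G] [Module ℂ G]
    (gr : ZMod 2 → Submodule ℂ G)
    (B : G →ₗ[ℂ] G →ₗ[ℂ] G) (E F H : G →ₗ[ℂ] G)
    (h : ShortSL2 gr B E F H) :
    ∀ pm pn pr ps : ZMod 2, ∀ m ∈ gr pm, ∀ n ∈ gr pn, ∀ r ∈ gr pr, ∀ s ∈ gr ps,
      H m = m → H n = n → H r = r → H s = s →
      B (trip B F m n r) s + sg pr (pm + pn) • B r (trip B F m n s)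
        = sg pn (pr + ps) • B m (B (B r s) (F n)) := by
  intro pm pn pr ps m hm n hn r hr s hs Hm Hn Hr Hs
  have hFn : F n ∈ gr pn := h.evenF pn n hn
  have ha : B m (F n) ∈ gr (pm + pn) := h.bracket_grade pm pn m hm (F n) hFn
  have hu : B r s ∈ gr (pr + ps) := h.bracket_grade pr ps r hr s hs
  have hHu : H (B r s) = (2:ℂ) • B r s := by
    rw [h.derH, Hr, Hs, two_smul]
  -- `[m, [r,s]] = 0` since eigenvalue 3 does not occur
  have hmu : B m (B r s) = 0 := by
    apply shortSL2_eig3_zero h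
    rw [h.derH, Hm, hHu, map_smul]
    module
  -- Jacobi for `a = [m, Fn]` against `[r, s]`
  have jac2 : B (B m (F n)) (B r s)
      = B (B (B m (F n)) r) s + sg (pm + pn) pr • B r (B (B m (F n)) s) :=
    h.jacobi (pm + pn) pr (B m (F n)) ha r hr s
  -- Jacobi for `m`, `Fn` against `[r, s]`, using `[m, [r,s]] = 0`
  have jac1 : B m (B (F n) (B r s)) = B (B m (F n)) (B r s) := by
    have := h.jacobi pm pn m hm (F n) hFn (B r s)
    rw [hmu] at this
    simpa using this
  have anti : B (F n) (B r s) = -(sg pn (pr + ps) • B (B r s) (F n)) :=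
    h.antisymm pn (pr + ps) (F n) hFn (B r s) hu
  have key : B (B m (F n)) (B r s) = -(sg pn (pr + ps) • B m (B (B r s) (F n))) := by
    rw [← jac1, anti]
    simp [map_neg, map_smul]
  have sgsymm : sg pr (pm + pn) = sg (pm + pn) pr := by
    simp [sg, Nat.mul_comm]
  have key2 : B (B (B m (F n)) r) s + sg pr (pm + pn) • B r (B (B m (F n)) s)
      = -(sg pn (pr + ps) • B m (B (B r s) (F n))) := by
    rw [sgsymm, ← jac2, key]
  simp only [trip, map_neg, LinearMap.neg_apply]
  linear_combination (norm := module) -key2
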